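/- Let p be a prime, S̄ = (S_0,…,S_n) an n-slice of the finite group G, and P a p-subgroup of N_G(S̄) = ⋂_{i=0}^n N_G(S_i). Let PS̄ denote the n-slice (PS_0,…,PS_n). Then for every chain of finite G-sets X of length n, φ_{S̄}(X) ≡ φ_{PS̄}(X) (mod p). -/

import Mathlib

variable {G : Type*}

/-- Composite map `X₀ → Xᵢ` of a chain of `G`-sets. -/
def chainComp (X : ℕ → Type) (f : ∀ i, X i → X (i + 1)) : ∀ i, X 0 → X i
  | 0 => id
  | i + 1 => f i ∘ chainComp X f i

/-- The invariant set `Inv_{S̄}(X)`. -/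
def sliceInv [Group G] {n : ℕ} (S : Fin (n + 1) → Subgroup G)
    (X : ℕ → Type) [∀ i, MulAction G (X i)] (f : ∀ i, X i → X (i + 1)) :
    Set (X 0) :=
  {x | ∀ i : Fin (n + 1), ∀ s ∈ S i, s • chainComp X f i x = chainComp X f i x}

/-- `φ_{S̄}(X) = |Inv_{S̄}(X)|`. -/
noncomputable def phiSlice [Group G] {n : ℕ} (S : Fin (n + 1) → Subgroup G)
    (X : ℕ → Type) [∀ i, MulAction G (X i)] (f : ∀ i, X i → X (i + 1)) : ℕ :=
  Nat.card (sliceInv S X f)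

/-- The normalizer `N_G(S̄) = ⋂ᵢ N_G(Sᵢ)` of a slice. -/
def sliceNormalizer [Group G] {n : ℕ} (S : Fin (n + 1) → Subgroup G) : Subgroup G :=
  ⨅ i, Subgroup.normalizer (S i : Set G)

lemma chainComp_smul' [Group G] (X : ℕ → Type) [∀ i, MulAction G (X i)]
    (f : ∀ i, X i → X (i + 1))
    (hf : ∀ (i : ℕ) (g : G) (x : X i), f i (g • x) = g • f i x)
    (i : ℕ) (g : G) (x : X 0) :
    chainComp X f i (g • x) = g • chainComp X f i x := by
  induction i with
  | zero => rfl
  | succ i ih => simp [chainComp, Function.comp, ih, hf]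

/-- if `p` is a prime, `S̄` an `n`-slice and `P` a `p`-subgroup of
`N_G(S̄)`, then `φ_{S̄}(X) ≡ φ_{PS̄}(X) (mod p)` for every chain of finite
`G`-sets `X` of length `n`. -/
theorem phi_congr_pSubgroup {n : ℕ} [Group G] [Finite G]
    (p : ℕ) (hp : p.Prime)
    (S : Fin (n + 1) → Subgroup G) (hS : Monotone S)
    (P : Subgroup G) (hP : IsPGroup p P) (hPN : P ≤ sliceNormalizer S)
    (X : ℕ → Type) [∀ i, Fintype (X i)] [∀ i, MulAction G (X i)]
    (f : ∀ i, X i → X (i + 1))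
    (hf : ∀ (i : ℕ) (g : G) (x : X i), f i (g • x) = g • f i x) :
    phiSlice S X f ≡ phiSlice (fun i => P ⊔ S i) X f [MOD p] := by
  classical
  set A := sliceInv S X f with hAdef
  have hA : ∀ g ∈ P, ∀ x ∈ A, g • x ∈ A := by
    intro g hg x hx i s hs
    have hgN : g ∈ Subgroup.normalizer (S i : Set G) := by
      have := hPN hg
      rw [sliceNormalizer, Subgroup.mem_iInf] at this
      exact this i
    have hconj : g⁻¹ * s * g ∈ S i := by
      have := (Subgroup.mem_normalizer_iff.mp hgN (g⁻¹ * s * g)).mpr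
      apply this
      group
      exact hs
    rw [chainComp_smul' X f hf]
    calc s • g • chainComp X f i x
        = g • (g⁻¹ * s * g) • chainComp X f i x := by
          simp [mul_smul]
      _ = g • chainComp X f i x := by rw [hx i _ hconj]
  letI : SMul P A := ⟨fun g x => ⟨(g : G) • (x : X 0), hA g g.2 x x.2⟩⟩
  have smul_def : ∀ (g : P) (x : A), ((g • x : A) : X 0) = (g : G) • (x : X 0) :=
    fun _ _ => rfl
  letI : MulAction P A :=
    { one_smul := fun x => Subtype.ext (by simp [smul_def])
      mul_smul := fun g h x => Subtype.ext (by simp [smul_def, mul_smul]) }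
  haveI := Fact.mk hp
  have key := hP.card_modEq_card_fixedPoints A
  have hcard : Nat.card (MulAction.fixedPoints P A)
      = Nat.card (sliceInv (fun i => P ⊔ S i) X f) := by
    apply Nat.card_congr
    refine Equiv.ofBijective (fun x => ⟨(x : A), ?_⟩) ⟨?_, ?_⟩
    · intro i s hs
      have hstab : P ⊔ S i ≤ MulAction.stabilizer G (chainComp X f i ((x : A) : X 0)) := by
        apply sup_le
        · intro g hg
          have hx : (⟨g, hg⟩ : P) • (x : A) = (x : A) := x.2 ⟨g, hg⟩
          have hx0 : g • ((x : A) : X 0) = ((x : A) : X 0) :=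
            congrArg Subtype.val hx
          simp only [MulAction.mem_stabilizer_iff]
          rw [← chainComp_smul' X f hf, hx0]
        · intro s hs
          exact (x : A).2 i s hs
      exact hstab hs
    · intro x y h
      apply Subtype.ext
      apply Subtype.ext
      simpa using congrArg Subtype.val h
    · rintro ⟨x, hx⟩
      have hxA : x ∈ A := fun i s hs => hx i s (le_sup_right (a := P) hs)
      refine ⟨⟨⟨x, hxA⟩, ?_⟩, rfl⟩
      intro g
      apply Subtype.ext
      show (g : G) • x = x
      have := hx 0 (g : G) (le_sup_left (b := S 0) g.2)
      exact this
  unfold phiSlice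
  rw [← hcard]
  exact key
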